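/- Let C be a cycle graph on n ≥ 3 vertices whose vertex set is partitioned into two nonempty sets A and B. Then the subgraph of C induced on A has exactly the same number of connected components as the subgraph of C induced on B. -/

import Mathlib

open SimpleGraph
open Fin.NatCast Fin.CommRing

private lemma cyc_adj_succ {m : ℕ} (i : Fin (m+2)) : (cycleGraph (m+2)).Adj i (i+1) := by
  rw [cycleGraph_adj]; right; simp

/-- reachability along a run of consecutive vertices inside `A` -/
private lemma run_reach {m : ℕ} {A : Set (Fin (m+2))} {a : Fin (m+2)} :
    ∀ (k : ℕ) (h : ∀ l ≤ k, a + (l : Fin (m+2)) ∈ A),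
    ((cycleGraph (m+2)).induce A).Reachable
      ⟨a, by simpa using h 0 (Nat.zero_le _)⟩ ⟨a + (k : Fin (m+2)), h k le_rfl⟩ := by
  intro k
  induction k with
  | zero =>
      intro h
      have he : (⟨a + ((0:ℕ) : Fin (m+2)), h 0 (Nat.zero_le _)⟩ : ↥A) =
          ⟨a, by simpa using h 0 (Nat.zero_le _)⟩ := Subtype.ext (by simp)
      rw [he]
  | succ k ih =>
      intro h
      refine (ih (fun l hl => h l (hl.trans (Nat.le_succ k)))).trans ?_
      apply Adj.reachable
      show (cycleGraph (m+2)).Adj (a + (k : Fin (m+2))) (a + ((k+1 : ℕ) : Fin (m+2)))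
      have : a + ((k+1 : ℕ) : Fin (m+2)) = (a + (k : Fin (m+2))) + 1 := by push_cast; ring
      rw [this]
      exact cyc_adj_succ _

/-- the set reachable from `i` inside `A` when `i+1 ∉ A` consists of `i - k`'s with
the whole stretch in `A` -/
private lemma walk_struct {m : ℕ} {A B : Set (Fin (m+2))}
    (hcover : A ∪ B = Set.univ) (hdisj : Disjoint A B)
    {i : Fin (m+2)} (hi : i ∈ A) (hi1 : i + 1 ∈ B)
    {u v : ↥A} (w : ((cycleGraph (m+2)).induce A).Walk u v)
    (hu : ∃ k : ℕ, (u : Fin (m+2)) = i - (k : Fin (m+2)) ∧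
        ∀ l ≤ k, i - (l : Fin (m+2)) ∈ A) :
    ∃ k : ℕ, (v : Fin (m+2)) = i - (k : Fin (m+2)) ∧
        ∀ l ≤ k, i - (l : Fin (m+2)) ∈ A := by
  induction w with
  | nil => exact hu
  | @cons x y z hadj p ih =>
      apply ih
      obtain ⟨k, hxk, hall⟩ := hu
      have hya : (y : Fin (m+2)) ∈ A := y.2
      have hadj' : (cycleGraph (m+2)).Adj (x : Fin (m+2)) (y : Fin (m+2)) := hadj
      rw [cycleGraph_adj] at hadj'
      rcases hadj' with h1 | h1
      · -- y = x - 1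
        have hy : (y : Fin (m+2)) = i - ((k+1 : ℕ) : Fin (m+2)) := by
          have : (y : Fin (m+2)) = (x : Fin (m+2)) - 1 := by
            rw [sub_eq_iff_eq_add] at h1; rw [h1]; ring
          rw [this, hxk]; push_cast; ring
        refine ⟨k+1, hy, fun l hl => ?_⟩
        rcases Nat.lt_or_ge l (k+1) with h | h
        · exact hall l (Nat.lt_succ_iff.mp h)
        · have : l = k + 1 := le_antisymm hl h
          rw [this, ← hy]; exact hya
      · -- y = x + 1
        have hy : (y : Fin (m+2)) = (x : Fin (m+2)) + 1 := by
          rw [sub_eq_iff_eq_add] at h1; rw [h1]; exact add_comm 1 _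
        cases k with
        | zero =>
            exfalso
            have : (y : Fin (m+2)) = i + 1 := by rw [hy, hxk]; push_cast; ring
            exact Set.disjoint_left.mp hdisj (this ▸ hya) hi1
        | succ k' =>
            refine ⟨k', ?_, fun l hl => hall l (hl.trans (Nat.le_succ k'))⟩
            rw [hy, hxk]; push_cast; ring

/-- The number of components induced on `A` equals the number of boundary exits of `A`. -/
private lemma comp_count {m : ℕ} {A B : Set (Fin (m+2))}
    (hB : B.Nonempty)
    (hcover : A ∪ B = Set.univ) (hdisj : Disjoint A B) :
    Nat.card ((cycleGraph (m+2)).induce A).ConnectedComponent =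
      Nat.card {i : Fin (m+2) // i ∈ A ∧ i + 1 ∈ B} := by
  have hmem : ∀ x : Fin (m+2), x ∉ B → x ∈ A := by
    intro x hx
    have : x ∈ A ∪ B := hcover ▸ Set.mem_univ x
    rcases this with h | h
    · exact h
    · exact absurd h hx
  symm
  apply Nat.card_congr
  refine Equiv.ofBijective
    (fun i => ((cycleGraph (m+2)).induce A).connectedComponentMk ⟨i.1, i.2.1⟩) ⟨?_, ?_⟩
  · rintro ⟨i, hi, hi1⟩ ⟨j, hj, hj1⟩ hij
    simp only [ConnectedComponent.eq] at hij
    obtain ⟨w⟩ := hij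
    obtain ⟨k, hk, hall⟩ := walk_struct hcover hdisj hi hi1 w
      ⟨0, by simp, by intro l hl; interval_cases l; simpa using hi⟩
    cases k with
    | zero =>
        apply Subtype.ext
        show i = j
        have : (⟨j, hj⟩ : ↥A).1 = i - ((0:ℕ) : Fin (m+2)) := hk
        simpa using this.symm
    | succ k' =>
        exfalso
        have hj' : j = i - ((k'+1 : ℕ) : Fin (m+2)) := hk
        have : j + 1 = i - (k' : Fin (m+2)) := by rw [hj']; push_cast; ring
        exact Set.disjoint_left.mp hdisj (this ▸ hall k' (Nat.le_succ k')) hj1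
  · intro c
    induction c using ConnectedComponent.ind with
    | _ v =>
      obtain ⟨a, ha⟩ := v
      obtain ⟨b, hb⟩ := hB
      -- find least k ≥ 1 with a + k ∈ B
      have hex : ∃ k : ℕ, 1 ≤ k ∧ a + (k : Fin (m+2)) ∈ B := by
        refine ⟨(b - a).val, ?_, ?_⟩
        · have hba : b ≠ a := fun h => Set.disjoint_left.mp hdisj ha (h ▸ hb)
          have hne : b - a ≠ 0 := sub_ne_zero_of_ne hba
          have : (b - a).val ≠ 0 := fun h => hne (Fin.ext (by simp [h]))
          omega
        · have he : a + (((b - a).val : ℕ) : Fin (m+2)) = b := by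
            rw [Fin.cast_val_eq_self]; abel
          rw [he]; exact hb
      classical
      let K := Nat.find hex
      have hK := Nat.find_spec hex
      have hK1 : 1 ≤ K := hK.1
      have hrun : ∀ l ≤ K - 1, a + (l : Fin (m+2)) ∈ A := by
        intro l hl
        rcases Nat.eq_zero_or_pos l with h0 | h0
        · subst h0; simpa using ha
        · apply hmem
          intro hmemB
          have := Nat.find_min hex (m := l) (by omega)
          exact this ⟨h0, hmemB⟩
      refine ⟨⟨a + ((K-1 : ℕ) : Fin (m+2)), hrun (K-1) le_rfl, ?_⟩, ?_⟩
      · have : a + ((K-1 : ℕ) : Fin (m+2)) + 1 = a + (K : Fin (m+2)) := by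
          have : ((K : ℕ) : Fin (m+2)) = ((K-1 : ℕ) : Fin (m+2)) + 1 := by
            have hKe : K = (K-1) + 1 := by omega
            rw [hKe]; push_cast; ring
          rw [this]; ring
        rw [this]; exact hK.2
      · simp only [ConnectedComponent.eq]
        exact (run_reach (K-1) hrun).symm

private lemma boundary_count {m : ℕ} {A B : Set (Fin (m+2))}
    (hcover : A ∪ B = Set.univ) (hdisj : Disjoint A B) :
    Nat.card {i : Fin (m+2) // i ∈ A ∧ i + 1 ∈ B} =
      Nat.card {i : Fin (m+2) // i ∈ B ∧ i + 1 ∈ A} := by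
  classical
  have hmem : ∀ x : Fin (m+2), x ∈ B ↔ x ∉ A := by
    intro x
    constructor
    · intro hx hxa; exact Set.disjoint_left.mp hdisj hxa hx
    · intro hx
      have : x ∈ A ∪ B := hcover ▸ Set.mem_univ x
      rcases this with h | h
      · exact absurd h hx
      · exact h
  rw [Nat.card_eq_fintype_card, Nat.card_eq_fintype_card, Fintype.card_subtype,
    Fintype.card_subtype]
  have key : ∀ s : Finset (Fin (m+2)),
      ((Finset.filter (fun i => i ∈ A ∧ i + 1 ∈ B) Finset.univ).card : ℤ) -
      ((Finset.filter (fun i => i ∈ B ∧ i + 1 ∈ A) Finset.univ).card : ℤ) = 0 := by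
    intro s
    rw [Finset.card_filter, Finset.card_filter]
    push_cast
    rw [← Finset.sum_sub_distrib]
    have step : ∀ i : Fin (m+2),
        ((if i ∈ A ∧ i + 1 ∈ B then (1:ℤ) else 0) - (if i ∈ B ∧ i + 1 ∈ A then 1 else 0)) =
        ((if i ∈ A then (1:ℤ) else 0) - (if i + 1 ∈ A then 1 else 0)) := by
      intro i
      by_cases h1 : i ∈ A <;> by_cases h2 : i + 1 ∈ A <;>
        simp [hmem, h1, h2]
    rw [Finset.sum_congr rfl (fun i _ => step i), Finset.sum_sub_distrib]
    have : ∑ i : Fin (m+2), (if i + 1 ∈ A then (1:ℤ) else 0) =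
        ∑ i : Fin (m+2), (if i ∈ A then (1:ℤ) else 0) :=
      Fintype.sum_equiv (Equiv.addRight (1 : Fin (m+2))) _ _ (fun i => rfl)
    rw [this, sub_self]
  have := key ∅
  omega

/-- A cycle graph on `n ≥ 3` vertices whose vertex set is partitioned into two
nonempty sets `A` and `B` has the same number of connected components induced
on `A` as induced on `B`. -/
theorem cycle_partition_component_count (n : ℕ) (hn : 3 ≤ n) (A B : Set (Fin n))
    (hA : A.Nonempty) (hB : B.Nonempty)
    (hcover : A ∪ B = Set.univ) (hdisj : Disjoint A B) :
    Nat.card ((SimpleGraph.cycleGraph n).induce A).ConnectedComponent =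
      Nat.card ((SimpleGraph.cycleGraph n).induce B).ConnectedComponent := by
  obtain ⟨m, rfl⟩ : ∃ m, n = m + 2 := ⟨n - 2, by omega⟩
  rw [comp_count hB hcover hdisj,
    comp_count hA (by rw [Set.union_comm]; exact hcover) hdisj.symm]
  exact boundary_count hcover hdisj
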